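/- Let C ⊆ F^n be a K-linear subspace. Then C is an 𝔽_q-linear additive conjucyclic code (i.e. T(C) ⊆ C) if and only if its image D = Ψ(C) ⊆ K^{2n} is a q-ary linear cyclic code of length 2n (i.e. σ(D) ⊆ D). -/

import Mathlib

/-- The map `Ψ : F^n → K^{2n}`,
`Ψ(α₀,…,α_{n−1}) = (Tr(βα₀),…,Tr(βα_{n−1}), Tr(β̄α₀),…,Tr(β̄α_{n−1}))`, where `β̄ = β^q`. -/
def Psi (q n : ℕ) {K F : Type*} [Field K] [Field F] (Tr : F → K) (β : F)
    (α : Fin n → F) : Fin (2 * n) → K :=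
  fun i =>
    if h : (i : ℕ) < n then Tr (β * α ⟨(i : ℕ), h⟩)
    else Tr (β ^ q * α ⟨(i : ℕ) - n, by have := i.isLt; omega⟩)

/-- The conjucyclic shift `T : F^n → F^n`, `T(c₀,…,c_{n−1}) = (c̄_{n−1}, c₀,…,c_{n−2})`
with `c̄ = c^q`. -/
def Tshift (q n : ℕ) {F : Type*} [Field F] (c : Fin n → F) : Fin n → F :=
  fun i =>
    if _h : (i : ℕ) = 0 then (c ⟨n - 1, by have := i.isLt; omega⟩) ^ q
    else c ⟨(i : ℕ) - 1, by have := i.isLt; omega⟩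

/-- The (right) cyclic shift `σ : K^m → K^m`, `σ(v₀,…,v_{m−1}) = (v_{m−1}, v₀,…,v_{m−2})`. -/
def cycShift (m : ℕ) {K : Type*} (v : Fin m → K) : Fin m → K :=
  fun i =>
    if _h : (i : ℕ) = 0 then v ⟨m - 1, by have := i.isLt; omega⟩
    else v ⟨(i : ℕ) - 1, by have := i.isLt; omega⟩

/-- Let `C ⊆ F^n` be a `K`-linear subspace.  Then `C` is an `𝔽_q`-linear
additive conjucyclic code (i.e. `T(C) ⊆ C`) if and only if its image `D = Ψ(C) ⊆ K^{2n}` is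
a `q`-ary linear cyclic code of length `2n` (a `K`-subspace with `σ(D) ⊆ D`). -/
theorem stmt4 (q n : ℕ) (hn : 0 < n) {K F : Type*} [Field K] [Fintype K] [Field F] [Fintype F]
    [Algebra K F] (hK : Fintype.card K = q) (hF : Fintype.card F = q ^ 2)
    (β : F) (hβ : ∀ x : F, x ≠ 0 → ∃ k : ℕ, x = β ^ k)
    (Tr : F → K) (hTr : ∀ x : F, algebraMap K F (Tr x) = x + x ^ q)
    (C : Submodule K (Fin n → F)) :
    (∀ c ∈ C, Tshift q n c ∈ C) ↔
      ∃ D : Submodule K (Fin (2 * n) → K),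
        (D : Set (Fin (2 * n) → K)) = Psi q n Tr β '' (C : Set (Fin n → F)) ∧
        ∀ d ∈ D, cycShift (2 * n) d ∈ D := by
  classical
  have hmap : Function.Injective (algebraMap K F) := (algebraMap K F).injective
  have hq2 : 2 ≤ q := hK ▸ Fintype.one_lt_card
  -- characteristic facts
  obtain ⟨p, hpK⟩ := CharP.exists K
  haveI : CharP K p := hpK
  obtain ⟨m, hp, hqm⟩ := FiniteField.card K p
  haveI hpF : CharP F p := charP_of_injective_algebraMap hmap p
  haveI : Fact p.Prime := ⟨hp⟩
  haveI : ExpChar F p := ExpChar.prime hp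
  have hq_pm : q = p ^ (m : ℕ) := by rw [← hK, hqm]
  have frob_add : ∀ x y : F, (x + y) ^ q = x ^ q + y ^ q := by
    intro x y; rw [hq_pm]; exact add_pow_char_pow ..
  have powF : ∀ x : F, (x ^ q) ^ q = x := by
    intro x
    have := FiniteField.pow_card x
    rw [hF, pow_two, pow_mul] at this
    exact this
  have powK : ∀ k : K, k ^ q = k := fun k => hK ▸ FiniteField.pow_card k
  -- trace identities
  have tr_add : ∀ x y : F, Tr (x + y) = Tr x + Tr y := by
    intro x y
    apply hmap
    rw [map_add, hTr, hTr, hTr, frob_add]; ring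
  have tr_smul : ∀ (k : K) (x : F), Tr (algebraMap K F k * x) = k * Tr x := by
    intro k x
    apply hmap
    rw [map_mul, hTr, hTr, mul_pow, ← map_pow, powK]
    ring
  have tr1 : ∀ x : F, Tr (β * x ^ q) = Tr (β ^ q * x) := by
    intro x
    apply hmap
    rw [hTr, hTr, mul_pow, mul_pow, powF, powF]
    ring
  have tr2 : ∀ x : F, Tr (β ^ q * x ^ q) = Tr (β * x) := by
    intro x
    apply hmap
    rw [hTr, hTr, mul_pow, mul_pow, powF, powF]
    ring
  -- accessor lemmas
  have psiA : ∀ (α : Fin n → F) (i : Fin (2 * n)) (h : (i : ℕ) < n),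
      Psi q n Tr β α i = Tr (β * α ⟨(i : ℕ), h⟩) := fun α i h => dif_pos h
  have psiB : ∀ (α : Fin n → F) (i : Fin (2 * n)) (h : ¬ (i : ℕ) < n),
      Psi q n Tr β α i = Tr (β ^ q * α ⟨(i : ℕ) - n, by have := i.isLt; omega⟩) :=
    fun α i h => dif_neg h
  have tA : ∀ (c : Fin n → F) (i : Fin n) (_h : (i : ℕ) = 0),
      Tshift q n c i = (c ⟨n - 1, by omega⟩) ^ q := fun c i h => dif_pos h
  have tB : ∀ (c : Fin n → F) (i : Fin n) (h : (i : ℕ) ≠ 0),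
      Tshift q n c i = c ⟨(i : ℕ) - 1, by have := i.isLt; omega⟩ := fun c i h => dif_neg h
  have sA : ∀ (v : Fin (2 * n) → K) (i : Fin (2 * n)) (_h : (i : ℕ) = 0),
      cycShift (2 * n) v i = v ⟨2 * n - 1, by omega⟩ := fun v i h => dif_pos h
  have sB : ∀ (v : Fin (2 * n) → K) (i : Fin (2 * n)) (h : (i : ℕ) ≠ 0),
      cycShift (2 * n) v i = v ⟨(i : ℕ) - 1, by have := i.isLt; omega⟩ :=
    fun v i h => dif_neg h
  have capp : ∀ (f : Fin n → F) (a b : ℕ) (ha : a < n) (hb : b < n),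
      a = b → f ⟨a, ha⟩ = f ⟨b, hb⟩ := by
    intro f a b ha hb h
    subst h; rfl
  -- the key commutation
  have key : ∀ c : Fin n → F,
      Psi q n Tr β (Tshift q n c) = cycShift (2 * n) (Psi q n Tr β c) := by
    intro c
    funext i
    have hi := i.isLt
    simp only [Psi, Tshift, cycShift]
    split_ifs with h1 h2 h3 h4 h5 h6 h7 h8 h9 h10 <;>
      simp -failIfUnchanged only [Fin.val_mk] at * <;>
      first
        | omega
        | rfl
        | (rw [tr1]; congr 2; exact capp c _ _ _ _ (by omega))
        | (rw [tr2]; congr 2; exact capp c _ _ _ _ (by omega))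
        | (congr 2; exact capp c _ _ _ _ (by omega))
  have h4 : 4 ≤ q ^ 2 := by simpa [pow_two] using Nat.mul_le_mul hq2 hq2
  -- β is nonzero
  have hβ0 : β ≠ 0 := by
    intro hβz
    have hcardU : Fintype.card Fˣ = q ^ 2 - 1 := by
      rw [Fintype.card_units, hF]
    have h1lt : 1 < Fintype.card Fˣ := by
      rw [hcardU]
      obtain ⟨s, hs⟩ : ∃ s, q ^ 2 = s := ⟨_, rfl⟩
      rw [hs] at h4 ⊢
      omega
    obtain ⟨u, hu⟩ := Fintype.exists_ne_of_one_lt_card h1lt 1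
    obtain ⟨k, hk⟩ := hβ u.val u.ne_zero
    rcases Nat.eq_zero_or_pos k with rfl | hkpos
    · simp only [pow_zero] at hk
      exact hu (Units.ext hk)
    · rw [hβz, zero_pow (by omega)] at hk
      exact u.ne_zero hk
  -- β ^ 2 ≠ β ^ q * β ^ q
  have hdet : β ^ 2 ≠ β ^ q * β ^ q := by
    intro hdeq
    have hpow : β ^ (2 * q - 2) = 1 := by
      have h2 : β ^ 2 * β ^ (2 * q - 2) = β ^ 2 * 1 := by
        rw [mul_one, ← pow_add, show 2 + (2 * q - 2) = 2 * q by omega,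
          show 2 * q = q + q by omega, pow_add, ← hdeq]
      exact mul_left_cancel₀ (pow_ne_zero 2 hβ0) h2
    set βu : Fˣ := Units.mk0 β hβ0 with hβu
    have hβuval : ∀ k : ℕ, (βu ^ k).val = β ^ k := by
      intro k; rw [hβu]; simp
    have hupow : βu ^ (2 * q - 2) = 1 := by
      apply Units.ext
      rw [hβuval]; exact hpow
    have hord : orderOf βu ≤ 2 * q - 2 :=
      orderOf_le_of_pow_eq_one (by omega) hupow
    have hordpos : 0 < orderOf βu := orderOf_pos βu
    set d := orderOf βu with hd
    have hinj : Function.Injective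
        (fun u : Fˣ => (⟨(Classical.choose (hβ u.val u.ne_zero)) % d,
          Nat.mod_lt _ hordpos⟩ : Fin d)) := by
      intro u₁ u₂ h
      have h' : Classical.choose (hβ u₁.val u₁.ne_zero) % d
          = Classical.choose (hβ u₂.val u₂.ne_zero) % d := by
        simpa using congrArg Fin.val h
      apply Units.ext
      rw [Classical.choose_spec (hβ u₁.val u₁.ne_zero),
        Classical.choose_spec (hβ u₂.val u₂.ne_zero)]
      calc β ^ Classical.choose (hβ u₁.val u₁.ne_zero)
          = (βu ^ Classical.choose (hβ u₁.val u₁.ne_zero)).val := (hβuval _).symm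
        _ = (βu ^ (Classical.choose (hβ u₁.val u₁.ne_zero) % d)).val := by
            rw [pow_mod_orderOf]
        _ = (βu ^ (Classical.choose (hβ u₂.val u₂.ne_zero) % d)).val := by rw [h']
        _ = (βu ^ Classical.choose (hβ u₂.val u₂.ne_zero)).val := by
            rw [pow_mod_orderOf]
        _ = β ^ Classical.choose (hβ u₂.val u₂.ne_zero) := hβuval _
    have hcard := Fintype.card_le_of_injective _ hinj
    rw [Fintype.card_fin, Fintype.card_units, hF] at hcard
    have hle : q ^ 2 - 1 ≤ 2 * q - 2 := le_trans hcard hord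
    have hq2' : 2 * q ≤ q ^ 2 := by rw [pow_two]; exact Nat.mul_le_mul hq2 le_rfl
    obtain ⟨s, hs⟩ : ∃ s, q ^ 2 = s := ⟨_, rfl⟩
    rw [hs] at hle hq2' h4
    omega
  -- Psi as a linear map
  let PsiL : (Fin n → F) →ₗ[K] (Fin (2 * n) → K) :=
    { toFun := Psi q n Tr β
      map_add' := by
        intro a b
        funext i
        unfold Psi
        by_cases h : (i : ℕ) < n
        · simp only [dif_pos h, Pi.add_apply, mul_add, tr_add]
        · simp only [dif_neg h, Pi.add_apply, mul_add, tr_add]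
      map_smul' := by
        intro k a
        funext i
        unfold Psi
        by_cases h : (i : ℕ) < n
        · simp only [dif_pos h, Pi.smul_apply, smul_eq_mul, RingHom.id_apply]
          rw [Algebra.smul_def, mul_left_comm, tr_smul]
        · simp only [dif_neg h, Pi.smul_apply, smul_eq_mul, RingHom.id_apply]
          rw [Algebra.smul_def, mul_left_comm, tr_smul] }
  -- injectivity of Psi
  have hker : ∀ α : Fin n → F, Psi q n Tr β α = 0 → α = 0 := by
    intro α hα
    funext j
    have h1 : Tr (β * α j) = 0 := by
      have h := congrFun hα ⟨(j : ℕ), by omega⟩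
      rw [psiA _ _ (show ((⟨(j : ℕ), by omega⟩ : Fin (2 * n)) : ℕ) < n by simp)]
        at h
      simpa using h
    have h2 : Tr (β ^ q * α j) = 0 := by
      have h := congrFun hα ⟨(j : ℕ) + n, by omega⟩
      rw [psiB _ _ (show ¬ ((⟨(j : ℕ) + n, by omega⟩ : Fin (2 * n)) : ℕ) < n by simp)] at h
      have hidx : ((j : ℕ) + n) - n = (j : ℕ) := by omega
      simp only [hidx, Fin.eta] at h
      simpa [hidx] using h
    have e1 : β * α j + β ^ q * (α j) ^ q = 0 := by
      have h := hTr (β * α j)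
      rw [h1, map_zero, mul_pow] at h
      linear_combination -h
    have e2 : β ^ q * α j + β * (α j) ^ q = 0 := by
      have h := hTr (β ^ q * α j)
      rw [h2, map_zero, mul_pow, powF] at h
      linear_combination -h
    have e3 : (β ^ 2 - β ^ q * β ^ q) * α j = 0 := by
      linear_combination β * e1 - β ^ q * e2
    have hne : β ^ 2 - β ^ q * β ^ q ≠ 0 := sub_ne_zero.mpr hdet
    have := (mul_eq_zero.mp e3).resolve_left hne
    simpa using this
  have psi_inj : Function.Injective (Psi q n Tr β) := by
    have : Function.Injective PsiL := by
      rw [← LinearMap.ker_eq_bot, LinearMap.ker_eq_bot']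
      exact hker
    exact this
  have hfun : ⇑PsiL = Psi q n Tr β := rfl
  constructor
  · intro hT
    refine ⟨Submodule.map PsiL C, ?_, ?_⟩
    · rw [Submodule.map_coe, hfun]
    · intro d hd
      rw [Submodule.mem_map] at hd
      obtain ⟨c, hc, rfl⟩ := hd
      rw [Submodule.mem_map]
      refine ⟨Tshift q n c, hT c hc, ?_⟩
      rw [hfun]
      exact key c
  · rintro ⟨D, hD, hσ⟩ c hc
    have h1 : Psi q n Tr β c ∈ D := by
      rw [← SetLike.mem_coe, hD]
      exact ⟨c, hc, rfl⟩
    have h2 : cycShift (2 * n) (Psi q n Tr β c) ∈ D := hσ _ h1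
    rw [← SetLike.mem_coe, hD] at h2
    obtain ⟨c', hc', hcc⟩ := h2
    have : c' = Tshift q n c := psi_inj (by rw [hcc, key])
    rwa [← this]
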